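/- Let X = M₀ ⊕ M_∞ be a Banach space decomposed as a topological direct sum and U : M₀ → M_∞ an invertible bounded operator. Set M_ω = {x₀ + ωUx₀ : x₀ ∈ M₀} for ω ∈ ℂ and let 𝔗 = {{0}, M₀, M₁, M_∞, X} be the resulting double triangle subspace lattice. Then Lat(Alg(𝔗)) = {M_ω : ω ∈ ℂ} ∪ {M_∞} ∪ {{0}, X}; in particular 𝔗 is not reflexive, and hence no double triangle subspace lattice in a finite-dimensional Banach space is reflexive. -/

import Mathlib

open ContinuousLinearMap

/-- The closed linear span (join) of a family of subspaces. -/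
noncomputable def cJoin {X : Type*} [NormedAddCommGroup X] [NormedSpace ℂ X]
    (S : Set (Submodule ℂ X)) : Submodule ℂ X :=
  (sSup S).topologicalClosure

/-- Join of two subspaces in the lattice of closed subspaces. -/
noncomputable def cJoin2 {X : Type*} [NormedAddCommGroup X] [NormedSpace ℂ X]
    (M N : Submodule ℂ X) : Submodule ℂ X :=
  (M ⊔ N).topologicalClosure

/-- A subspace lattice: a complete lattice of closed subspaces containing the trivial ones. -/
def IsSubspaceLattice {X : Type*} [NormedAddCommGroup X] [NormedSpace ℂ X]
    (L : Set (Submodule ℂ X)) : Prop :=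
  (∀ M ∈ L, IsClosed (M : Set X)) ∧ ⊥ ∈ L ∧ ⊤ ∈ L ∧
    ∀ S ⊆ L, cJoin S ∈ L ∧ sInf S ∈ L

/-- Alg(F): bounded operators leaving every member of F invariant. -/
def algOf {X : Type*} [NormedAddCommGroup X] [NormedSpace ℂ X]
    (L : Set (Submodule ℂ X)) : Set (X →L[ℂ] X) :=
  {A | ∀ M ∈ L, ∀ x ∈ M, A x ∈ M}

/-- Lat(T): closed subspaces invariant under every operator in T. -/
def latOf {X : Type*} [NormedAddCommGroup X] [NormedSpace ℂ X]
    (T : Set (X →L[ℂ] X)) : Set (Submodule ℂ X) :=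
  {M | IsClosed (M : Set X) ∧ ∀ A ∈ T, ∀ x ∈ M, A x ∈ M}

/-- The rank-one operator e ⊗ η : x ↦ η(x) • e. -/
noncomputable def rankOne {X : Type*} [NormedAddCommGroup X] [NormedSpace ℂ X]
    (e : X) (η : X →L[ℂ] ℂ) : X →L[ℂ] X :=
  η.smulRight e

/-- The rank-one operators in a set of operators. -/
noncomputable def Rk1 {X : Type*} [NormedAddCommGroup X] [NormedSpace ℂ X]
    (T : Set (X →L[ℂ] X)) : Set (X →L[ℂ] X) :=
  {A ∈ T | ∃ (e : X) (η : X →L[ℂ] ℂ), e ≠ 0 ∧ η ≠ 0 ∧ A = rankOne e η}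

/-- M₋ = ⋁{K ∈ L : M ⊄ K}. -/
noncomputable def mMinus {X : Type*} [NormedAddCommGroup X] [NormedSpace ℂ X]
    (L : Set (Submodule ℂ X)) (M : Submodule ℂ X) : Submodule ℂ X :=
  cJoin {K | K ∈ L ∧ ¬ M ≤ K}

/-- M₊ = ⋀{K ∈ L : K ⊄ M}. -/
noncomputable def mPlus {X : Type*} [NormedAddCommGroup X] [NormedSpace ℂ X]
    (L : Set (Submodule ℂ X)) (M : Submodule ℂ X) : Submodule ℂ X :=
  sInf {K | K ∈ L ∧ ¬ K ≤ M}

/-- N_* = ⋀{M₋ : M ∈ L, M ⊄ N}. -/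
noncomputable def nStar {X : Type*} [NormedAddCommGroup X] [NormedSpace ℂ X]
    (L : Set (Submodule ℂ X)) (N : Submodule ℂ X) : Submodule ℂ X :=
  sInf {P | ∃ M, M ∈ L ∧ ¬ M ≤ N ∧ P = mMinus L M}

/-- The cyclic subspace [Alg(L)x]: closed linear span of the orbit of x under Alg(L). -/
noncomputable def cyclicSubspace {X : Type*} [NormedAddCommGroup X] [NormedSpace ℂ X]
    (L : Set (Submodule ℂ X)) (x : X) : Submodule ℂ X :=
  (Submodule.span ℂ ((fun A : X →L[ℂ] X => A x) '' algOf L)).topologicalClosure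

/-- The pinch points of a family of subspaces. -/
def pinOf {X : Type*} [NormedAddCommGroup X] [NormedSpace ℂ X]
    (L : Set (Submodule ℂ X)) : Set (Submodule ℂ X) :=
  {P | P ∈ L ∧ ∀ M ∈ L, M ≤ P ∨ P ≤ M}


/-- The subspace M_ω = {x₀ + ω·U x₀ : x₀ ∈ M₀}. -/
noncomputable def Momega {X : Type*} [NormedAddCommGroup X] [NormedSpace ℂ X]
    (M₀ Minf : Submodule ℂ X) (U : M₀ ≃L[ℂ] Minf) (ω : ℂ) : Submodule ℂ X :=
  LinearMap.range
    (M₀.subtype + ω • (Minf.subtype ∘ₗ ((U : M₀ →L[ℂ] Minf) : M₀ →ₗ[ℂ] Minf)))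

theorem mem_Momega {X : Type*} [NormedAddCommGroup X] [NormedSpace ℂ X]
    (M₀ Minf : Submodule ℂ X) (U : M₀ ≃L[ℂ] Minf) (ω : ℂ) (x : X) :
    x ∈ Momega M₀ Minf U ω ↔ ∃ v : M₀, (v : X) + ω • ((U v : Minf) : X) = x := by
  simp [Momega, LinearMap.mem_range, LinearMap.add_apply, LinearMap.smul_apply]

theorem exists_sep {E : Type*} [NormedAddCommGroup E] [NormedSpace ℂ E] {x y : E}
    (hx : x ≠ 0) (hy : ∀ a : ℂ, a • x ≠ y) : ∃ η : E →L[ℂ] ℂ, η x = 0 ∧ η y = 1 := by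
  have hli : LinearIndependent ℂ ![y, x] := by
    rw [linearIndependent_fin2]
    refine ⟨by simpa using hx, fun a h => hy a (by simpa using h)⟩
  set p := Submodule.span ℂ (Set.range ![y, x]) with hp
  haveI : FiniteDimensional ℂ p := FiniteDimensional.span_of_finite ℂ (Set.finite_range _)
  set b := Module.Basis.span hli with hb
  set g : p →L[ℂ] ℂ := LinearMap.toContinuousLinearMap (b.coord 0) with hg
  obtain ⟨η, hη, -⟩ := exists_extension_norm_eq p g
  have hbx : ((b 1 : p) : E) = x := by rw [Module.Basis.span_apply]; simp
  have hby : ((b 0 : p) : E) = y := by rw [Module.Basis.span_apply]; simp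
  refine ⟨η, ?_, ?_⟩
  · have := hη (b 1); rw [hbx] at this; rw [this]; simp [hg, Module.Basis.coord_apply]
  · have := hη (b 0); rw [hby] at this; rw [this]; simp [hg, Module.Basis.coord_apply]

theorem dt_lat_eq
    {X : Type*} [NormedAddCommGroup X] [NormedSpace ℂ X] [CompleteSpace X]
    (M₀ Minf : Submodule ℂ X)
    (hM₀c : IsClosed (M₀ : Set X)) (hMinfc : IsClosed (Minf : Set X))
    (hmeet : M₀ ⊓ Minf = ⊥) (hsum : M₀ ⊔ Minf = ⊤)
    (U : M₀ ≃L[ℂ] Minf) :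
    latOf (algOf ({⊥, M₀, Momega M₀ Minf U 1, Minf, ⊤} : Set (Submodule ℂ X))) =
      ({N | ∃ ω : ℂ, N = Momega M₀ Minf U ω} ∪ {Minf} ∪ {⊥, ⊤}) := by
  have hc : IsCompl M₀ Minf := ⟨disjoint_iff.mpr hmeet, codisjoint_iff.mpr hsum⟩
  set P₀ : X →L[ℂ] M₀ := M₀.linearProjOfClosedCompl Minf hc hM₀c hMinfc with hP₀
  set Pi : X →L[ℂ] Minf := Minf.linearProjOfClosedCompl M₀ hc.symm hMinfc hM₀c with hPi
  have hP₀l : ∀ v : M₀, P₀ (v : X) = v := fun v => by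
    simp [hP₀, Submodule.coe_continuous_linearProjOfClosedCompl',
      Submodule.linearProjOfIsCompl_apply_left]
  have hP₀r : ∀ z : Minf, P₀ (z : X) = 0 := fun z => by
    simp [hP₀, Submodule.coe_continuous_linearProjOfClosedCompl']
  have hPil : ∀ z : Minf, Pi (z : X) = z := fun z => by
    simp [hPi, Submodule.coe_continuous_linearProjOfClosedCompl',
      Submodule.linearProjOfIsCompl_apply_left]
  have hPir : ∀ v : M₀, Pi (v : X) = 0 := fun v => by
    simp [hPi, Submodule.coe_continuous_linearProjOfClosedCompl']
  have hsumP : ∀ x : X, ((P₀ x : X) + (Pi x : X)) = x := fun x => by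
    simpa [hP₀, hPi, Submodule.coe_continuous_linearProjOfClosedCompl'] using
      Submodule.projection_add_projection_eq_self hc x
  have hmz : ∀ x : X, x ∈ M₀ → x ∈ Minf → x = 0 := fun x h1 h2 => by
    have := hmeet ▸ Submodule.mem_inf.2 ⟨h1, h2⟩
    simpa using this
  set TT : Set (Submodule ℂ X) := {⊥, M₀, Momega M₀ Minf U 1, Minf, ⊤} with hTT
  have hM₀T : M₀ ∈ TT := by simp [hTT]
  have hM₁T : Momega M₀ Minf U 1 ∈ TT := by simp [hTT]
  have hMiT : Minf ∈ TT := by simp [hTT]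
  -- conjugation property of elements of the algebra
  have hconj : ∀ A ∈ algOf TT, ∀ v : M₀, ∃ w : M₀, A (v : X) = (w : X) ∧
      A ((U v : Minf) : X) = ((U w : Minf) : X) := by
    intro A hA v
    have h1 : A (v : X) ∈ M₀ := hA M₀ hM₀T _ v.2
    have h2 : A ((U v : Minf) : X) ∈ Minf := hA Minf hMiT _ (U v).2
    have h3 : A ((v : X) + ((U v : Minf) : X)) ∈ Momega M₀ Minf U 1 :=
      hA _ hM₁T _ ((mem_Momega _ _ _ _ _).2 ⟨v, by rw [one_smul]⟩)
    obtain ⟨u, hu⟩ := (mem_Momega _ _ _ _ _).1 h3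
    rw [one_smul] at hu
    have hAadd : A (v : X) + A ((U v : Minf) : X) = (u : X) + ((U u : Minf) : X) := by
      rw [← map_add]; exact hu.symm
    have hd : A (v : X) - (u : X) = ((U u : Minf) : X) - A ((U v : Minf) : X) := by
      rw [sub_eq_sub_iff_add_eq_add, hAadd]
      rw [add_comm]
    have hmem0 : A (v : X) - (u : X) ∈ M₀ := M₀.sub_mem h1 u.2
    have hmemi : A (v : X) - (u : X) ∈ Minf := hd ▸ Minf.sub_mem (U u).2 h2
    have hz := hmz _ hmem0 hmemi
    have hAv : A (v : X) = (u : X) := by rwa [sub_eq_zero] at hz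
    refine ⟨u, hAv, ?_⟩
    have := hAadd
    rw [hAv] at this
    exact add_left_cancel this
  -- closedness of Momega
  have hMomC : ∀ ω : ℂ, IsClosed ((Momega M₀ Minf U ω : Submodule ℂ X) : Set X) := by
    intro ω
    have hset : ((Momega M₀ Minf U ω : Submodule ℂ X) : Set X)
        = {x | ((Pi x : Minf) : X) = ω • ((U (P₀ x) : Minf) : X)} := by
      ext x
      simp only [Set.mem_setOf_eq, SetLike.mem_coe, mem_Momega]
      constructor
      · rintro ⟨v, rfl⟩
        have e1 : P₀ ((v : X) + ω • ((U v : Minf) : X)) = v := by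
          rw [map_add, hP₀l]
          have : ((ω • (U v) : Minf) : X) = ω • ((U v : Minf) : X) := by simp
          rw [← this, hP₀r]; simp
        have e2 : Pi ((v : X) + ω • ((U v : Minf) : X)) = ω • (U v) := by
          rw [map_add, hPir]
          have : ((ω • (U v) : Minf) : X) = ω • ((U v : Minf) : X) := by simp
          rw [← this, hPil]; simp
        rw [e1, e2]; simp
      · intro h
        refine ⟨P₀ x, ?_⟩
        rw [← h]; exact hsumP x
    rw [hset]
    exact isClosed_eq (continuous_subtype_val.comp Pi.continuous)
      ((continuous_subtype_val.comp (U.continuous.comp P₀.continuous)).const_smul ω)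
  -- orbit lemma
  have horb : ∀ (N : Submodule ℂ X), (∀ A ∈ algOf TT, ∀ x ∈ N, A x ∈ N) →
      ∀ (B : M₀ →L[ℂ] M₀) (n : X), n ∈ N →
      ((B (P₀ n) : X) + ((U (B (U.symm (Pi n))) : Minf) : X)) ∈ N := by
    intro N hNi B n hn
    set A : X →L[ℂ] X := M₀.subtypeL.comp (B.comp P₀) +
      (Minf.subtypeL.comp (((U : M₀ →L[ℂ] Minf)).comp
        (B.comp (((U.symm : Minf →L[ℂ] M₀)).comp Pi)))) with hA
    have hAx : ∀ x, A x = (B (P₀ x) : X) + ((U (B (U.symm (Pi x))) : Minf) : X) := by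
      intro x; simp [hA]
    have hAmem : A ∈ algOf TT := by
      intro M hM x hx
      rw [hTT] at hM
      simp only [Set.mem_insert_iff, Set.mem_singleton_iff] at hM
      rcases hM with rfl | rfl | rfl | rfl | rfl
      · simp only [Submodule.mem_bot] at hx
        subst hx; simpa using (map_zero A)
      · rw [hAx]
        have e1 : P₀ x = ⟨x, hx⟩ := hP₀l ⟨x, hx⟩
        have e2 : Pi x = 0 := hPir ⟨x, hx⟩
        rw [e1, e2]
        simpa using (B ⟨x, hx⟩).2
      · obtain ⟨v, rfl⟩ := (mem_Momega _ _ _ _ _).1 hx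
        rw [one_smul] at *
        rw [hAx]
        have e1 : P₀ ((v : X) + ((U v : Minf) : X)) = v := by
          rw [map_add, hP₀l, hP₀r, add_zero]
        have e2 : Pi ((v : X) + ((U v : Minf) : X)) = U v := by
          rw [map_add, hPir, hPil, zero_add]
        rw [e1, e2, ContinuousLinearEquiv.symm_apply_apply]
        exact (mem_Momega _ _ _ _ _).2 ⟨B v, by rw [one_smul]⟩
      · rw [hAx]
        have e1 : P₀ x = 0 := hP₀r ⟨x, hx⟩
        have e2 : Pi x = ⟨x, hx⟩ := hPil ⟨x, hx⟩
        rw [e1, e2]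
        simpa using (U (B (U.symm ⟨x, hx⟩))).2
      · exact Submodule.mem_top
    have := hNi A hAmem n hn
    rwa [hAx n] at this
  -- key lemma: Momega ω ≤ N when N contains a "graph" vector
  have key : ∀ (N : Submodule ℂ X), (∀ A ∈ algOf TT, ∀ x ∈ N, A x ∈ N) →
      ∀ m ∈ N, ∀ ω : ℂ, P₀ m ≠ 0 → U.symm (Pi m) = ω • P₀ m →
      Momega M₀ Minf U ω ≤ N := by
    intro N hNi m hm ω hPm hcoef z hz
    obtain ⟨v, rfl⟩ := (mem_Momega _ _ _ _ _).1 hz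
    obtain ⟨η, hη⟩ := SeparatingDual.exists_eq_one (R := ℂ) hPm
    have h := horb N hNi (η.smulRight v) m hm
    have e1 : (η.smulRight v) (P₀ m) = v := by simp [hη]
    have e2 : (η.smulRight v) (U.symm (Pi m)) = ω • v := by
      rw [hcoef]; simp [hη, smul_smul]
    rw [e1, e2] at h
    simpa using h
  apply Set.eq_of_subset_of_subset
  · -- latOf ⊆ RHS
    rintro N ⟨hNc, hNi⟩
    by_cases hP0N : ∀ n ∈ N, P₀ n = 0
    · by_cases hNbot : N = ⊥
      · exact Or.inr (by simp [hNbot])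
      · left; right
        have hNle : N ≤ Minf := by
          intro x hx
          have hx2 : x = ((Pi x : Minf) : X) := by
            have h := hsumP x; rw [hP0N x hx] at h; simpa using h.symm
          rw [hx2]; exact (Pi x).2
        have hle2 : Minf ≤ N := by
          obtain ⟨x, hxN, hx0⟩ := Submodule.ne_bot_iff N |>.1 hNbot
          have hxMi : x = ((Pi x : Minf) : X) := by
            have h := hsumP x; rw [hP0N x hxN] at h; simpa using h.symm
          have hb0 : U.symm (Pi x) ≠ 0 := by
            intro h
            apply hx0
            have : Pi x = 0 := by
              have := congrArg U h
              simpa using this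
            rw [hxMi, this]; simp
          intro z hz
          obtain ⟨η, hη⟩ := SeparatingDual.exists_eq_one (R := ℂ) hb0
          have h := horb N hNi (η.smulRight (U.symm ⟨z, hz⟩)) x hxN
          rw [hP0N x hxN] at h
          simpa [hη] using h
        exact Set.mem_singleton_iff.2 (le_antisymm hNle hle2)
    · push_neg at hP0N
      obtain ⟨n, hnN, hn0⟩ := hP0N
      by_cases hprop : ∀ m ∈ N, P₀ m ≠ 0 → ∃ ω : ℂ, U.symm (Pi m) = ω • P₀ m
      · obtain ⟨ω, hω⟩ := hprop n hnN hn0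
        have hMn : Momega M₀ Minf U ω ≤ N := key N hNi n hnN ω hn0 hω
        by_cases hle : N ≤ Momega M₀ Minf U ω
        · exact Or.inl (Or.inl ⟨ω, le_antisymm hle hMn⟩)
        · obtain ⟨m, hmN, hmnot⟩ := SetLike.not_le_iff_exists.1 hle
          have hex : ∃ ω' : ℂ, ω' ≠ ω ∧ Momega M₀ Minf U ω' ≤ N := by
            by_cases hPm : P₀ m = 0
            · have hm0 : m ≠ 0 := fun h => hmnot (h ▸ (Momega M₀ Minf U ω).zero_mem)
              have hmmi : m = ((Pi m : Minf) : X) := by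
                have h := hsumP m; rw [hPm] at h; simpa using h.symm
              have hPnm : P₀ (n + m) ≠ 0 := by rw [map_add, hPm, add_zero]; exact hn0
              obtain ⟨ω'', h''⟩ := hprop (n + m) (N.add_mem hnN hmN) hPnm
              rw [map_add, map_add, map_add, hPm, add_zero] at h''
              refine ⟨ω'', fun h => ?_, key N hNi (n + m) (N.add_mem hnN hmN) ω''
                (by rw [map_add, hPm, add_zero]; exact hn0)
                (by rw [map_add, map_add, map_add, hPm, add_zero]; exact h'')⟩
              rw [h, hω] at h''
              have hz : U.symm (Pi m) = 0 := by
                have h2 := h''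
                nth_rewrite 2 [← add_zero (ω • P₀ n)] at h2
                exact add_left_cancel h2
              have hPiz : Pi m = 0 := by
                have := congrArg U hz
                simpa using this
              exact hm0 (by rw [hmmi, hPiz]; simp)
            · obtain ⟨ω', h'⟩ := hprop m hmN hPm
              have hne : ω' ≠ ω := by
                intro h; subst h
                apply hmnot
                refine (mem_Momega _ _ _ _ _).2 ⟨P₀ m, ?_⟩
                have hPim : ((Pi m : Minf) : X) = ω' • ((U (P₀ m) : Minf) : X) := by
                  have : Pi m = U (U.symm (Pi m)) := by simp
                  rw [this, h']; simp
                rw [← hPim]; exact hsumP m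
              exact ⟨ω', hne, key N hNi m hmN ω' hPm h'⟩
          obtain ⟨ω', hne, hM'⟩ := hex
          have hMiN : Minf ≤ N := by
            intro z hz
            set v : M₀ := (ω' - ω)⁻¹ • U.symm ⟨z, hz⟩ with hv
            have h1 : ((v : X) + ω' • ((U v : Minf) : X)) ∈ N :=
              hM' ((mem_Momega _ _ _ _ _).2 ⟨v, rfl⟩)
            have h2 : ((v : X) + ω • ((U v : Minf) : X)) ∈ N :=
              hMn ((mem_Momega _ _ _ _ _).2 ⟨v, rfl⟩)
            have h3 := N.sub_mem h1 h2
            have hUv : ((U v : Minf) : X) = (ω' - ω)⁻¹ • z := by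
              rw [hv]; simp
            have hcalc : ((v : X) + ω' • ((U v : Minf) : X)) - ((v : X) + ω • ((U v : Minf) : X)) = z := by
              rw [hUv]
              rw [smul_smul, smul_smul]
              rw [add_sub_add_left_eq_sub, ← sub_smul, ← sub_mul]
              rw [mul_inv_cancel₀ (sub_ne_zero.2 hne), one_smul]
            rwa [hcalc] at h3
          have hM0N : M₀ ≤ N := by
            intro z hz
            have h1 : (((⟨z, hz⟩ : M₀) : X) + ω • ((U ⟨z, hz⟩ : Minf) : X)) ∈ N :=
              hMn ((mem_Momega _ _ _ _ _).2 ⟨⟨z, hz⟩, rfl⟩)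
            have h2 : (ω • ((U ⟨z, hz⟩ : Minf) : X)) ∈ N :=
              hMiN (Minf.smul_mem ω (U ⟨z, hz⟩).2)
            have := N.sub_mem h1 h2
            simpa using this
          have hNtop : N = ⊤ := eq_top_iff.2 (hsum ▸ sup_le hM0N hMiN)
          exact Or.inr (by simp [hNtop])
      · push_neg at hprop
        obtain ⟨m, hmN, hPm0, hnoc⟩ := hprop
        obtain ⟨η, hηa, hηb⟩ := exists_sep hPm0 (fun c h => hnoc c h.symm)
        have hMi : Minf ≤ N := by
          intro z hz
          have h := horb N hNi (η.smulRight (U.symm ⟨z, hz⟩)) m hmN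
          simpa [hηa, hηb] using h
        have haN : ((P₀ m : M₀) : X) ∈ N := by
          have h1 : ((Pi m : Minf) : X) ∈ N := hMi (Pi m).2
          have h2 := N.sub_mem hmN h1
          rwa [← eq_sub_of_add_eq (hsumP m)] at h2
        have hM0 : M₀ ≤ N := by
          intro z hz
          obtain ⟨η2, hη2⟩ := SeparatingDual.exists_eq_one (R := ℂ) hPm0
          have h := horb N hNi (η2.smulRight ⟨z, hz⟩) ((P₀ m : M₀) : X) haN
          rw [hP₀l, hPir] at h
          simpa [hη2] using h
        have hNtop : N = ⊤ := eq_top_iff.2 (hsum ▸ sup_le hM0 hMi)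
        exact Or.inr (by simp [hNtop])
  · -- RHS ⊆ latOf
    intro N hN
    simp only [Set.mem_union, Set.mem_setOf_eq, Set.mem_singleton_iff,
      Set.mem_insert_iff] at hN
    rcases hN with ((⟨ω, rfl⟩ | rfl) | rfl | rfl)
    · refine ⟨hMomC ω, ?_⟩
      intro A hA x hx
      obtain ⟨v, rfl⟩ := (mem_Momega _ _ _ _ _).1 hx
      obtain ⟨w, hw1, hw2⟩ := hconj A hA v
      refine (mem_Momega _ _ _ _ _).2 ⟨w, ?_⟩
      rw [map_add, hw1]
      congr 1
      rw [map_smul, hw2]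
    · exact ⟨hMinfc, fun A hA x hx => hA _ hMiT x hx⟩
    · refine ⟨by rw [Submodule.bot_coe]; exact isClosed_singleton, ?_⟩
      intro A hA x hx
      simp only [Submodule.mem_bot] at hx ⊢
      rw [hx, map_zero]
    · exact ⟨by rw [Submodule.top_coe]; exact isClosed_univ,
        fun A hA x hx => Submodule.mem_top⟩

theorem dt_ne
    {X : Type*} [NormedAddCommGroup X] [NormedSpace ℂ X] [CompleteSpace X]
    (M₀ Minf : Submodule ℂ X)
    (hM₀c : IsClosed (M₀ : Set X)) (hMinfc : IsClosed (Minf : Set X))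
    (hmeet : M₀ ⊓ Minf = ⊥) (hsum : M₀ ⊔ Minf = ⊤)
    (h0 : M₀ ≠ ⊥)
    (U : M₀ ≃L[ℂ] Minf) :
    latOf (algOf ({⊥, M₀, Momega M₀ Minf U 1, Minf, ⊤} : Set (Submodule ℂ X))) ≠
      ({⊥, M₀, Momega M₀ Minf U 1, Minf, ⊤} : Set (Submodule ℂ X)) := by
  intro h
  have hmz : ∀ x : X, x ∈ M₀ → x ∈ Minf → x = 0 := fun x h1 h2 => by
    have := hmeet ▸ Submodule.mem_inf.2 ⟨h1, h2⟩
    simpa using this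
  obtain ⟨x, hxM, hx0⟩ := (Submodule.ne_bot_iff M₀).1 h0
  set v : M₀ := ⟨x, hxM⟩ with hv
  have hv0 : v ≠ 0 := by simp [hv, hx0]
  have hUv0 : U v ≠ 0 := by simp [hv0]
  have hUv0' : ((U v : Minf) : X) ≠ 0 := by simpa using hUv0
  have h2mem : Momega M₀ Minf U 2 ∈
      latOf (algOf ({⊥, M₀, Momega M₀ Minf U 1, Minf, ⊤} : Set (Submodule ℂ X))) := by
    rw [dt_lat_eq M₀ Minf hM₀c hMinfc hmeet hsum U]
    exact Or.inl (Or.inl ⟨2, rfl⟩)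
  rw [h] at h2mem
  have he : ((v : X) + (2 : ℂ) • ((U v : Minf) : X)) ∈ Momega M₀ Minf U 2 :=
    (mem_Momega _ _ _ _ _).2 ⟨v, rfl⟩
  simp only [Set.mem_insert_iff, Set.mem_singleton_iff] at h2mem
  rcases h2mem with hEq | hEq | hEq | hEq | hEq
  · -- Momega 2 = ⊥
    rw [hEq] at he
    simp only [Submodule.mem_bot] at he
    have hvm : (v : X) = -((2 : ℂ) • ((U v : Minf) : X)) :=
      eq_neg_of_add_eq_zero_left he
    have : (v : X) = 0 := hmz _ v.2 (hvm ▸ Minf.neg_mem (Minf.smul_mem 2 (U v).2))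
    exact hx0 this
  · -- Momega 2 = M₀
    rw [hEq] at he
    have hsub : ((2 : ℂ) • ((U v : Minf) : X)) ∈ M₀ := by
      have := M₀.sub_mem he v.2
      simpa using this
    have := hmz _ hsub (Minf.smul_mem 2 (U v).2)
    rw [smul_eq_zero] at this
    rcases this with h2 | h2
    · norm_num at h2
    · exact hUv0' h2
  · -- Momega 2 = Momega 1
    rw [hEq] at he
    obtain ⟨w, hw⟩ := (mem_Momega _ _ _ _ _).1 he
    rw [one_smul] at hw
    have hd : (w : X) - (v : X) = (2 : ℂ) • ((U v : Minf) : X) - ((U w : Minf) : X) := by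
      rw [sub_eq_sub_iff_add_eq_add, add_comm ((2:ℂ) • _)]
      exact hw
    have hz := hmz _ (M₀.sub_mem w.2 v.2)
      (hd ▸ Minf.sub_mem (Minf.smul_mem 2 (U v).2) (U w).2)
    have hwv : w = v := by
      have : (w : X) = (v : X) := by rwa [sub_eq_zero] at hz
      exact Subtype.ext this
    rw [hz] at hd
    have : (2 : ℂ) • ((U v : Minf) : X) = ((U v : Minf) : X) := by
      rw [hwv] at hd
      have := hd.symm
      rwa [sub_eq_zero] at this
    have h1 : ((2 : ℂ) - 1) • ((U v : Minf) : X) = 0 := by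
      rw [sub_smul, one_smul, this, sub_self]
    rw [smul_eq_zero] at h1
    rcases h1 with h2 | h2
    · norm_num at h2
    · exact hUv0' h2
  · -- Momega 2 = Minf
    rw [hEq] at he
    have : (v : X) ∈ Minf := by
      have := Minf.sub_mem he (Minf.smul_mem 2 (U v).2)
      simpa using this
    exact hx0 (hmz _ v.2 this)
  · -- Momega 2 = ⊤
    have hUvmem : ((U v : Minf) : X) ∈ Momega M₀ Minf U 2 := by
      rw [hEq]; exact Submodule.mem_top
    obtain ⟨w, hw⟩ := (mem_Momega _ _ _ _ _).1 hUvmem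
    have hwm : (w : X) = ((U v : Minf) : X) - (2 : ℂ) • ((U w : Minf) : X) := by
      rw [← hw]; abel
    have hz := hmz _ w.2 (hwm ▸ Minf.sub_mem (U v).2 (Minf.smul_mem 2 (U w).2))
    have hw0 : w = 0 := by simpa using hz
    rw [hw0] at hw
    simp only [Submodule.coe_zero, map_zero, smul_zero, add_zero, zero_add] at hw
    exact hUv0' hw.symm

theorem dt_findim (Y : Type) [NormedAddCommGroup Y] [NormedSpace ℂ Y]
    (hfd : FiniteDimensional ℂ Y)
    (K L M : Submodule ℂ Y)
    (hK0 : K ≠ ⊥) (hL0 : L ≠ ⊥) (hM0 : M ≠ ⊥)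
    (hKL : K ≠ L) (hLM : L ≠ M) (hKM : K ≠ M)
    (hKLm : K ⊓ L = ⊥) (hKMm : K ⊓ M = ⊥) (hLMm : L ⊓ M = ⊥)
    (hKLs : K ⊔ L = ⊤) (hKMs : K ⊔ M = ⊤) (hLMs : L ⊔ M = ⊤) :
    latOf (algOf ({⊥, K, L, M, ⊤} : Set (Submodule ℂ Y))) ≠
      ({⊥, K, L, M, ⊤} : Set (Submodule ℂ Y)) := by
  haveI := hfd
  haveI : CompleteSpace Y := FiniteDimensional.complete ℂ Y
  have hc : IsCompl K M := ⟨disjoint_iff.mpr hKMm, codisjoint_iff.mpr hKMs⟩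
  set pK := K.projectionOnto M hc with hpK
  set pM := M.projectionOnto K hc.symm with hpM
  set φ : L →ₗ[ℂ] K := pK ∘ₗ L.subtype with hφ
  have hφinj : Function.Injective φ := by
    rw [← LinearMap.ker_eq_bot, LinearMap.ker_eq_bot']
    intro l hl
    have h1 : (l : Y) ∈ M := (Submodule.linearProjOfIsCompl_apply_eq_zero_iff hc).1 hl
    have : (l : Y) ∈ L ⊓ M := Submodule.mem_inf.2 ⟨l.2, h1⟩
    rw [hLMm] at this
    exact Subtype.ext (by simpa using this)
  have hφsurj : Function.Surjective φ := by
    intro k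
    have : (k : Y) ∈ L ⊔ M := by rw [hLMs]; exact Submodule.mem_top
    obtain ⟨l, hl, m, hm, hlm⟩ := Submodule.mem_sup.1 this
    refine ⟨⟨l, hl⟩, ?_⟩
    have : φ ⟨l, hl⟩ = pK l := rfl
    rw [this]
    have h1 : pK (l + m) = pK l := by
      rw [map_add, Submodule.linearProjOfIsCompl_apply_right' hc hm, add_zero]
    have h2 : pK (l + m) = k := by rw [hlm]; exact Submodule.linearProjOfIsCompl_apply_left hc k
    rw [← h1, h2]
  set φe : L ≃ₗ[ℂ] K := LinearEquiv.ofBijective φ ⟨hφinj, hφsurj⟩ with hφe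
  set Ul : K →ₗ[ℂ] M := pM ∘ₗ L.subtype ∘ₗ (φe.symm : K →ₗ[ℂ] L) with hUl
  have hpKsymm : ∀ k : K, pK ((φe.symm k : L) : Y) = k := by
    intro k
    have : φ (φe.symm k) = k := φe.apply_symm_apply k
    exact this
  have hkey : ∀ k : K, (k : Y) + ((Ul k : M) : Y) = ((φe.symm k : L) : Y) := by
    intro k
    have h1 : (pK ((φe.symm k : L) : Y) : Y) + (pM ((φe.symm k : L) : Y) : Y) = ((φe.symm k : L) : Y) :=
      Submodule.projection_add_projection_eq_self hc ((φe.symm k : L) : Y)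
    rw [hpKsymm k] at h1
    exact h1
  have hUinj : Function.Injective Ul := by
    rw [← LinearMap.ker_eq_bot, LinearMap.ker_eq_bot']
    intro k hk
    have h1 := hkey k
    rw [hk] at h1
    simp only [Submodule.coe_zero, add_zero] at h1
    have : (k : Y) ∈ K ⊓ L := Submodule.mem_inf.2 ⟨k.2, h1 ▸ (φe.symm k).2⟩
    rw [hKLm] at this
    exact Subtype.ext (by simpa using this)
  have hUsurj : Function.Surjective Ul := by
    intro m
    have : (m : Y) ∈ K ⊔ L := by rw [hKLs]; exact Submodule.mem_top
    obtain ⟨k', hk', l', hl', hkl⟩ := Submodule.mem_sup.1 this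
    set k : K := φ ⟨l', hl'⟩ with hk
    refine ⟨k, ?_⟩
    have hsy : φe.symm k = ⟨l', hl'⟩ := by
      rw [hk]
      exact φe.symm_apply_apply ⟨l', hl'⟩
    have h1 := hkey k
    rw [hsy] at h1
    have h1' : (k : Y) + ((Ul k : M) : Y) = l' := h1
    have h2 : (m : Y) - ((Ul k : M) : Y) = k' + (k : Y) := by
      rw [← hkl, ← h1']; abel
    have h3 : (m : Y) - ((Ul k : M) : Y) ∈ K := h2 ▸ K.add_mem hk' k.2
    have h4 : (m : Y) - ((Ul k : M) : Y) ∈ M := M.sub_mem m.2 (Ul k).2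
    have : (m : Y) - ((Ul k : M) : Y) ∈ K ⊓ M := Submodule.mem_inf.2 ⟨h3, h4⟩
    rw [hKMm] at this
    have h5 : (m : Y) = ((Ul k : M) : Y) := by
      have := (Submodule.mem_bot ℂ).1 this
      rwa [sub_eq_zero] at this
    exact (Subtype.ext h5).symm
  set Ue : K ≃ₗ[ℂ] M := LinearEquiv.ofBijective Ul ⟨hUinj, hUsurj⟩ with hUe
  set Uc : K ≃L[ℂ] M := Ue.toContinuousLinearEquiv with hUc
  have hUcv : ∀ v : K, (Uc v : M) = Ul v := fun v => rfl
  have hMom : Momega K M Uc 1 = L := by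
    ext y
    rw [mem_Momega]
    constructor
    · rintro ⟨v, rfl⟩
      rw [one_smul, hUcv v]
      exact (hkey v) ▸ (φe.symm v).2
    · intro hy
      refine ⟨φ ⟨y, hy⟩, ?_⟩
      rw [one_smul, hUcv]
      have hsy : φe.symm (φ ⟨y, hy⟩) = ⟨y, hy⟩ := φe.symm_apply_apply ⟨y, hy⟩
      have := hkey (φ ⟨y, hy⟩)
      rw [hsy] at this
      exact this
  have := dt_ne K M K.closed_of_finiteDimensional M.closed_of_finiteDimensional
    hKMm hKMs hK0 Uc
  rwa [hMom] at this

/-- The invariant subspace lattice of a double triangle subspace lattice 𝔗_U is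
{M_ω : ω ∈ ℂ} ∪ {M_∞} ∪ {0, X}; in particular 𝔗_U is not reflexive, and hence no double
triangle subspace lattice in a finite-dimensional Banach space is reflexive. -/
theorem doubleTriangle_not_reflexive
    {X : Type*} [NormedAddCommGroup X] [NormedSpace ℂ X] [CompleteSpace X]
    (M₀ Minf : Submodule ℂ X)
    (hM₀c : IsClosed (M₀ : Set X)) (hMinfc : IsClosed (Minf : Set X))
    (hmeet : M₀ ⊓ Minf = ⊥) (hsum : M₀ ⊔ Minf = ⊤)
    (h0 : M₀ ≠ ⊥) (hinf : Minf ≠ ⊥)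
    (U : M₀ ≃L[ℂ] Minf) :
    latOf (algOf ({⊥, M₀, Momega M₀ Minf U 1, Minf, ⊤} : Set (Submodule ℂ X))) =
      ({N | ∃ ω : ℂ, N = Momega M₀ Minf U ω} ∪ {Minf} ∪ {⊥, ⊤}) ∧
    latOf (algOf ({⊥, M₀, Momega M₀ Minf U 1, Minf, ⊤} : Set (Submodule ℂ X))) ≠
      ({⊥, M₀, Momega M₀ Minf U 1, Minf, ⊤} : Set (Submodule ℂ X)) ∧
    (∀ (Y : Type) (_ : NormedAddCommGroup Y) (_ : NormedSpace ℂ Y),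
      FiniteDimensional ℂ Y →
      ∀ K L M : Submodule ℂ Y,
        K ≠ ⊥ → L ≠ ⊥ → M ≠ ⊥ → K ≠ L → L ≠ M → K ≠ M →
        K ⊓ L = ⊥ → K ⊓ M = ⊥ → L ⊓ M = ⊥ →
        K ⊔ L = ⊤ → K ⊔ M = ⊤ → L ⊔ M = ⊤ →
        latOf (algOf ({⊥, K, L, M, ⊤} : Set (Submodule ℂ Y))) ≠
          ({⊥, K, L, M, ⊤} : Set (Submodule ℂ Y))) := by
  refine ⟨dt_lat_eq M₀ Minf hM₀c hMinfc hmeet hsum U,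
    dt_ne M₀ Minf hM₀c hMinfc hmeet hsum h0 U, ?_⟩
  intro Y iY1 iY2 hfd K L M hK0 hL0 hM0 hKL hLM hKM hKLm hKMm hLMm hKLs hKMs hLMs
  exact @dt_findim Y iY1 iY2 hfd K L M hK0 hL0 hM0 hKL hLM hKM hKLm hKMm hLMm hKLs hKMs hLMs
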